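/- For simple random walk on \mathbb{Z}^d, \sum_{x \in B_M} P_x[\tau_0 < \tau_M] \ge M, where \tau_0 is the hitting time of 0 and \tau_M the exit time from B_M = \{x : \|x\|_2 \le M\}. -/

import Mathlib

open MeasureTheory ProbabilityTheory Filter
open scoped ENNReal NNReal

noncomputable section

/-- The set of unit steps of the simple random walk on `ℤ^d`. -/
def stepSet (d : ℕ) : Finset (Fin d → ℤ) :=
  (Finset.univ : Finset (Fin d × Bool)).image
    (fun p => fun j => if j = p.1 then (if p.2 then 1 else -1) else 0)

/-- Simple random walk on `ℤ^d`, given by a measure on the space of step sequences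
under which the coordinates are i.i.d. uniform on the set of unit steps. -/
structure SRW (d : ℕ) where
  P : Measure (ℕ → Fin d → ℤ)
  hprob : IsProbabilityMeasure P
  hne : (stepSet d).Nonempty
  hindep : iIndepFun (fun n ω => ω n) P
  hdist : ∀ n, P.map (fun ω => ω n) = (PMF.uniformOfFinset (stepSet d) hne).toMeasure

namespace SRW

variable {d : ℕ}

/-- Position at time `t` of the walk started at `x`. -/
def pos (W : SRW d) (x : Fin d → ℤ) (t : ℕ) (ω : ℕ → Fin d → ℤ) : Fin d → ℤ :=
  x + ∑ i ∈ Finset.range t, ω i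

/-- The Euclidean ball of radius `M` in `ℤ^d`. -/
def ball (d M : ℕ) : Finset (Fin d → ℤ) :=
  (Finset.Icc (fun _ => -(M : ℤ)) (fun _ => (M : ℤ))).filter
    (fun x => ∑ i, (x i) ^ 2 ≤ (M : ℤ) ^ 2)

/-- The event that the walk started at `x` has not exited `ball d M` by time `t`,
i.e. the exit time is `> t`. -/
def stays (W : SRW d) (x : Fin d → ℤ) (M t : ℕ) : Set (ℕ → Fin d → ℤ) :=
  {ω | ∀ s ≤ t, W.pos x s ω ∈ ball d M}

/-- The Green function `G_M(a,b)`: expected number of visits to `b`, strictly before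
exiting `ball d M`, of the walk started at `a`. -/
def green (W : SRW d) (M : ℕ) (a b : Fin d → ℤ) : ℝ≥0∞ :=
  ∑' t, W.P ({ω | W.pos a t ω = b} ∩ W.stays a M t)

/-- Expected exit time from `ball d M` of the walk started at `x`, computed as
`E[τ] = ∑_{t ≥ 0} P[τ > t]`. -/
def exitTimeExp (W : SRW d) (x : Fin d → ℤ) (M : ℕ) : ℝ≥0∞ :=
  ∑' t, W.P (W.stays x M t)

/-- The event that the walk started at `x` hits `0` before exiting `ball d M`. -/
def hitBefore (W : SRW d) (x : Fin d → ℤ) (M : ℕ) : Set (ℕ → Fin d → ℤ) :=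
  {ω | ∃ t, W.pos x t ω = 0 ∧ ∀ s ≤ t, W.pos x s ω ∈ ball d M}

end SRW

/-- Simple random walk on `ℤ`. -/
structure SRW1 where
  P : Measure (ℕ → ℤ)
  hprob : IsProbabilityMeasure P
  hindep : iIndepFun (fun n ω => ω n) P
  hdist : ∀ n, P.map (fun ω => ω n) =
    (PMF.uniformOfFinset ({-1, 1} : Finset ℤ) (by simp)).toMeasure

namespace SRW1

def pos (W : SRW1) (x : ℤ) (t : ℕ) (ω : ℕ → ℤ) : ℤ :=
  x + ∑ i ∈ Finset.range t, ω i

def stays (W : SRW1) (x : ℤ) (M : ℕ) (t : ℕ) : Set (ℕ → ℤ) :=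
  {ω | ∀ s ≤ t, W.pos x s ω ∈ Finset.Icc (-(M : ℤ)) (M : ℤ)}

def green (W : SRW1) (M : ℕ) (a b : ℤ) : ℝ≥0∞ :=
  ∑' t, W.P ({ω | W.pos a t ω = b} ∩ W.stays a M t)

def exitTimeExp (W : SRW1) (x : ℤ) (M : ℕ) : ℝ≥0∞ :=
  ∑' t, W.P (W.stays x M t)

def hitBefore (W : SRW1) (x : ℤ) (M : ℕ) : Set (ℕ → ℤ) :=
  {ω | ∃ t, W.pos x t ω = 0 ∧ ∀ s ≤ t, W.pos x s ω ∈ Finset.Icc (-(M : ℤ)) (M : ℤ)}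

end SRW1

namespace SumHitAux
open SRW

variable {d : ℕ}

def step (i : Fin d) (b : Bool) : Fin d → ℤ :=
  fun j => if j = i then (if b then 1 else -1) else 0

lemma stepSet_eq : stepSet d = Finset.univ.image (fun p : Fin d × Bool => step p.1 p.2) := rfl

lemma step_injective : Function.Injective (fun p : Fin d × Bool => step p.1 p.2) := by
  rintro ⟨i, b⟩ ⟨j, c⟩ h
  simp only at h
  have h1 := congrFun h i
  by_cases hij : i = j
  · subst hij
    simp only [step, if_pos rfl] at h1
    cases b <;> cases c <;> simp_all
  · exfalso
    simp only [step, if_pos rfl, if_neg hij] at h1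
    cases b <;> simp_all

lemma card_stepSet : (stepSet d).card = 2 * d := by
  rw [stepSet_eq, Finset.card_image_of_injective _ step_injective, Finset.card_univ]
  simp [Fintype.card_prod, Nat.mul_comm]

lemma sum_stepSet {β : Type*} [AddCommMonoid β] (f : (Fin d → ℤ) → β) :
    ∑ e ∈ stepSet d, f e = ∑ i : Fin d, (f (step i true) + f (step i false)) := by
  rw [stepSet_eq, Finset.sum_image (fun a _ b _ h => step_injective h), Fintype.sum_prod_type]
  exact Finset.sum_congr rfl fun i _ => by rw [Fintype.sum_bool]

lemma mem_stepSet_iff {e : Fin d → ℤ} : e ∈ stepSet d ↔ ∃ i b, e = step i b := by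
  rw [stepSet_eq]
  simp only [Finset.mem_image, Finset.mem_univ, true_and, Prod.exists]
  constructor
  · rintro ⟨i, b, h⟩; exact ⟨i, b, h.symm⟩
  · rintro ⟨i, b, h⟩; exact ⟨i, b, h.symm⟩

lemma step_ne_zero (i : Fin d) (b : Bool) : step i b ≠ 0 := by
  intro h
  have := congrFun h i
  simp [step] at this
  cases b <;> simp_all

lemma mem_ball_iff {M : ℕ} {x : Fin d → ℤ} :
    x ∈ ball d M ↔ ∑ i, (x i) ^ 2 ≤ (M : ℤ) ^ 2 := by
  rw [ball, Finset.mem_filter, Finset.mem_Icc]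
  constructor
  · exact fun h => h.2
  · intro h
    refine ⟨⟨fun i => ?_, fun i => ?_⟩, h⟩ <;> [show -(M:ℤ) ≤ x i; show x i ≤ (M:ℤ)] <;>
    · have h1 : (x i) ^ 2 ≤ (M : ℤ) ^ 2 := by
        refine le_trans (Finset.single_le_sum (f := fun j => (x j)^2) (fun j _ => sq_nonneg _) (Finset.mem_univ i)) h
      have hM : (0:ℤ) ≤ (M:ℤ) := Int.natCast_nonneg M
      nlinarith [sq_nonneg (x i + M), sq_nonneg (x i - M)]

lemma not_mem_ball {M : ℕ} {x : Fin d → ℤ} (h : x ∉ ball d M) :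
    (M : ℤ) ^ 2 + 1 ≤ ∑ i, (x i) ^ 2 := by
  rw [mem_ball_iff, not_le] at h; omega

lemma zero_mem_ball {M : ℕ} : (0 : Fin d → ℤ) ∈ ball d M := by
  rw [mem_ball_iff]; simp

lemma step_mem_ball {M : ℕ} (hM : 1 ≤ M) (i : Fin d) (b : Bool) : step i b ∈ ball d M := by
  rw [mem_ball_iff]
  have : ∑ j, (step i b j) ^ 2 = 1 := by
    rw [show (1:ℤ) = ∑ j, (if j = i then 1 else 0) from by simp]
    refine Finset.sum_congr rfl fun j _ => ?_
    by_cases h : j = i <;> cases b <;> simp [step, h]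
  rw [this]
  have : (1:ℤ) ≤ (M:ℤ) := by exact_mod_cast hM
  nlinarith

lemma sum_sq_step (i : Fin d) (b : Bool) : ∑ j, (step i b j) ^ 2 = 1 := by
  rw [show (1:ℤ) = ∑ j, (if j = i then 1 else 0) from by simp]
  refine Finset.sum_congr rfl fun j _ => ?_
  by_cases h : j = i <;> cases b <;> simp [step, h]

lemma sum_mul_step (x : Fin d → ℤ) (i : Fin d) (b : Bool) :
    ∑ j, x j * step i b j = (if b then 1 else -1) * x i := by
  rw [show (if b then (1:ℤ) else -1) * x i = ∑ j, (if j = i then (if b then 1 else -1) * x j else 0) from by simp]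
  refine Finset.sum_congr rfl fun j _ => ?_
  by_cases h : j = i <;> simp [step, h, mul_comm]

end SumHitAux

namespace SumHitAux
open SRW

variable {d : ℕ}

/-- squared Euclidean norm, as a real number -/
def qr (x : Fin d → ℤ) : ℝ := ∑ i, ((x i : ℝ)) ^ 2

def rho (x : Fin d → ℤ) : ℝ := Real.sqrt (qr x)

lemma qr_nonneg (x : Fin d → ℤ) : 0 ≤ qr x := Finset.sum_nonneg fun i _ => sq_nonneg _

lemma rho_nonneg (x : Fin d → ℤ) : 0 ≤ rho x := Real.sqrt_nonneg _

lemma rho_sq (x : Fin d → ℤ) : rho x ^ 2 = qr x := Real.sq_sqrt (qr_nonneg x)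

lemma qr_eq_cast (x : Fin d → ℤ) : qr x = ((∑ i, (x i) ^ 2 : ℤ) : ℝ) := by
  rw [qr]; push_cast; ring

lemma qr_zero : qr (0 : Fin d → ℤ) = 0 := by simp [qr]

lemma rho_zero : rho (0 : Fin d → ℤ) = 0 := by simp [rho, qr_zero]

lemma sq_coord_le_qr (x : Fin d → ℤ) (i : Fin d) : ((x i : ℝ)) ^ 2 ≤ qr x :=
  Finset.single_le_sum (f := fun j => ((x j : ℝ))^2) (fun j _ => sq_nonneg _) (Finset.mem_univ i)

lemma qr_add_step (x : Fin d → ℤ) (i : Fin d) (b : Bool) :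
    qr (x + step i b) = qr x + 2 * (if b then 1 else -1) * (x i : ℝ) + 1 := by
  have h1 : ∑ j, (x j + step i b j)^2 = ∑ j, (x j)^2 + 2 * ∑ j, x j * step i b j + ∑ j, (step i b j)^2 := by
    have e : ∀ j, (x j + step i b j)^2 = (x j)^2 + 2*(x j * step i b j) + (step i b j)^2 :=
      fun j => by ring
    simp only [e, Finset.sum_add_distrib, Finset.mul_sum]
  have h2 := sum_mul_step x i b
  have h3 := sum_sq_step i b
  rw [qr_eq_cast, qr_eq_cast]
  have : ∀ j, (x + step i b) j = x j + step i b j := fun j => rfl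
  simp only [this]
  rw [h1, h2, h3]
  push_cast
  cases b <;> simp <;> ring

/-- key elementary inequality: `√(q+2a+1) + √(q-2a+1) ≥ 2√q` when `a² ≤ q`. -/
lemma sqrt_pair_ineq {q a : ℝ} (hq : 0 ≤ q) (ha : a ^ 2 ≤ q) :
    2 * Real.sqrt q ≤ Real.sqrt (q + 2 * a + 1) + Real.sqrt (q - 2 * a + 1) := by
  have h1 : 0 ≤ q + 2 * a + 1 := by nlinarith [sq_nonneg (a + 1)]
  have h2 : 0 ≤ q - 2 * a + 1 := by nlinarith [sq_nonneg (a - 1)]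
  set s1 := Real.sqrt (q + 2 * a + 1)
  set s2 := Real.sqrt (q - 2 * a + 1)
  have hs1 : 0 ≤ s1 := Real.sqrt_nonneg _
  have hs2 : 0 ≤ s2 := Real.sqrt_nonneg _
  have hs1sq : s1 ^ 2 = q + 2 * a + 1 := Real.sq_sqrt h1
  have hs2sq : s2 ^ 2 = q - 2 * a + 1 := Real.sq_sqrt h2
  have hprod : s1 * s2 = Real.sqrt ((q + 2 * a + 1) * (q - 2 * a + 1)) :=
    (Real.sqrt_mul h1 _).symm
  have hge : q - 1 ≤ s1 * s2 := by
    rcases le_or_gt q 1 with hq1 | hq1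
    · have : (0:ℝ) ≤ s1 * s2 := mul_nonneg hs1 hs2
      linarith
    · have hsq : (q - 1) ^ 2 ≤ (q + 2 * a + 1) * (q - 2 * a + 1) := by nlinarith
      calc q - 1 = Real.sqrt ((q-1)^2) := by
              rw [Real.sqrt_sq (by linarith)]
        _ ≤ s1 * s2 := by rw [hprod]; exact Real.sqrt_le_sqrt hsq
  have hsum_sq : (2 * Real.sqrt q) ^ 2 ≤ (s1 + s2) ^ 2 := by
    have : (2 * Real.sqrt q) ^ 2 = 4 * q := by
      rw [mul_pow, Real.sq_sqrt hq]; ring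
    nlinarith
  have h2s : 0 ≤ 2 * Real.sqrt q := by positivity
  nlinarith [abs_le_abs (le_refl ((s1+s2)^2))]

end SumHitAux

namespace SumHitAux
open SRW

variable {d M : ℕ}

/-- the constant `√(M²+1)` -/
def cM (M : ℕ) : ℝ := Real.sqrt ((M : ℝ) ^ 2 + 1)

lemma cM_nonneg : 0 ≤ cM M := Real.sqrt_nonneg _

lemma cM_sq : cM M ^ 2 = (M : ℝ) ^ 2 + 1 := Real.sq_sqrt (by positivity)

lemma cM_ge_M : (M : ℝ) ≤ cM M := by
  rw [show (M:ℝ) = Real.sqrt ((M:ℝ)^2) from (Real.sqrt_sq (by positivity)).symm]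
  exact Real.sqrt_le_sqrt (by linarith)

lemma cM_ge_one : 1 ≤ cM M := by
  rw [show (1:ℝ) = Real.sqrt 1 from Real.sqrt_one.symm]
  exact Real.sqrt_le_sqrt (by nlinarith [sq_nonneg ((M:ℝ))])

/-- the test potential -/
def uF (d M : ℕ) (x : Fin d → ℤ) : ℝ :=
  if x ∈ ball d M ∧ x ≠ 0 then cM M * rho x - qr x else 0

lemma uF_eq_of_mem {x : Fin d → ℤ} (h : x ∈ ball d M) (h0 : x ≠ 0) :
    uF d M x = cM M * rho x - qr x := if_pos ⟨h, h0⟩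

lemma uF_eq_zero_of_not_mem {x : Fin d → ℤ} (h : x ∉ ball d M) : uF d M x = 0 := by
  rw [uF, if_neg]; tauto

lemma uF_zero : uF d M 0 = 0 := by rw [uF, if_neg]; tauto

lemma uF_ge (x : Fin d → ℤ) : cM M * rho x - qr x ≤ uF d M x := by
  by_cases h : x ∈ ball d M ∧ x ≠ 0
  · rw [uF, if_pos h]
  · rw [uF, if_neg h]
    rcases eq_or_ne x 0 with rfl | hx
    · rw [qr_zero, rho_zero]; simp
    have h : x ∉ ball d M := fun hm => h ⟨hm, hx⟩
    -- outside the ball : qr x ≥ M² + 1 = cM², so cM * rho ≤ rho * rho = qr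
    have h1 : (M : ℤ)^2 + 1 ≤ ∑ i, (x i)^2 := not_mem_ball h
    have h2 : (M : ℝ)^2 + 1 ≤ qr x := by
      rw [qr_eq_cast]; exact_mod_cast h1
    have h3 : cM M ≤ rho x := by
      rw [cM, rho]; exact Real.sqrt_le_sqrt h2
    have h4 : cM M * rho x ≤ rho x * rho x :=
      mul_le_mul_of_nonneg_right h3 (rho_nonneg x)
    have h5 : rho x * rho x = qr x := by
      have := rho_sq x; nlinarith
    linarith

lemma uF_step (hM : 1 ≤ M) (i : Fin d) (b : Bool) : uF d M (step i b) = cM M - 1 := by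
  rw [uF_eq_of_mem (step_mem_ball hM i b) (step_ne_zero i b)]
  have h1 : qr (step i b) = 1 := by
    rw [qr_eq_cast, sum_sq_step]; norm_num
  rw [rho, h1, Real.sqrt_one]; ring

lemma sum_rho_step (x : Fin d → ℤ) :
    2 * (d : ℝ) * rho x ≤ ∑ e ∈ stepSet d, rho (x + e) := by
  rw [sum_stepSet (fun e => rho (x + e))]
  have key : ∀ i : Fin d, 2 * rho x ≤ rho (x + step i true) + rho (x + step i false) := by
    intro i
    have h1 := qr_add_step x i true
    have h2 := qr_add_step x i false
    simp only [if_pos, if_neg] at h1 h2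
    rw [rho, rho, rho, h1, h2]
    have := sqrt_pair_ineq (qr_nonneg x) (sq_coord_le_qr x i)
    calc 2 * Real.sqrt (qr x) ≤ Real.sqrt (qr x + 2 * (x i : ℝ) + 1) + Real.sqrt (qr x - 2 * (x i:ℝ) + 1) := this
      _ = Real.sqrt (qr x + 2 * 1 * (x i:ℝ) + 1) + Real.sqrt (qr x + 2 * (-1) * (x i:ℝ) + 1) := by
          ring_nf
  calc 2 * (d:ℝ) * rho x = ∑ _i : Fin d, 2 * rho x := by
        rw [Finset.sum_const, Finset.card_univ, Fintype.card_fin]; ring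
    _ ≤ _ := Finset.sum_le_sum fun i _ => key i

lemma sum_qr_step (x : Fin d → ℤ) :
    ∑ e ∈ stepSet d, qr (x + e) = 2 * (d:ℝ) * qr x + 2 * d := by
  rw [sum_stepSet (fun e => qr (x + e))]
  have key : ∀ i : Fin d, qr (x + step i true) + qr (x + step i false) = 2 * qr x + 2 := by
    intro i
    rw [qr_add_step x i true, qr_add_step x i false]
    simp; ring
  rw [Finset.sum_congr rfl fun i _ => key i, Finset.sum_add_distrib]
  rw [Finset.sum_const, Finset.sum_const, Finset.card_univ, Fintype.card_fin]
  simp; ring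

/-- The key pointwise inequality `-Δu ≤ 1` on `ball \ {0}`. -/
lemma uF_superharm {x : Fin d → ℤ} (hx : x ∈ ball d M) (h0 : x ≠ 0) :
    2 * (d:ℝ) * uF d M x - 2 * d ≤ ∑ e ∈ stepSet d, uF d M (x + e) := by
  have h1 : ∑ e ∈ stepSet d, (cM M * rho (x + e) - qr (x + e)) ≤ ∑ e ∈ stepSet d, uF d M (x + e) :=
    Finset.sum_le_sum fun e _ => uF_ge (x + e)
  have h2 : ∑ e ∈ stepSet d, (cM M * rho (x + e) - qr (x + e))
      = cM M * (∑ e ∈ stepSet d, rho (x + e)) - ∑ e ∈ stepSet d, qr (x + e) := by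
    rw [Finset.sum_sub_distrib, Finset.mul_sum]
  have h3 := sum_rho_step x
  have h4 := sum_qr_step x
  have h5 : cM M * (2 * (d:ℝ) * rho x) ≤ cM M * (∑ e ∈ stepSet d, rho (x + e)) :=
    mul_le_mul_of_nonneg_left h3 cM_nonneg
  rw [uF_eq_of_mem hx h0]
  calc 2 * (d:ℝ) * (cM M * rho x - qr x) - 2 * d
      = cM M * (2 * (d:ℝ) * rho x) - (2 * (d:ℝ) * qr x + 2 * d) := by ring
    _ ≤ cM M * (∑ e ∈ stepSet d, rho (x + e)) - ∑ e ∈ stepSet d, qr (x + e) := by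
        rw [h4]; linarith
    _ = ∑ e ∈ stepSet d, (cM M * rho (x + e) - qr (x + e)) := h2.symm
    _ ≤ _ := h1

end SumHitAux

namespace SumHitAux
open SRW

variable {d M : ℕ}

/-- extension of a finite word to `ℕ → V` by zero -/
def wext {s : ℕ} (w : Fin s → (Fin d → ℤ)) : ℕ → (Fin d → ℤ) :=
  fun i => if h : i < s then w ⟨i, h⟩ else 0

/-- position after `k` steps of the word `w`, starting from `x` -/
def path (x : Fin d → ℤ) {s : ℕ} (w : Fin s → (Fin d → ℤ)) (k : ℕ) : Fin d → ℤ :=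
  x + ∑ i ∈ Finset.range k, wext w i

lemma path_zero (x : Fin d → ℤ) {s : ℕ} (w : Fin s → (Fin d → ℤ)) : path x w 0 = x := by
  simp [path]

/-- first-hit words: length-`s` words of steps along which the walk from `x` stays in
the ball through time `s`, is nonzero before time `s` and hits `0` at time `s`. -/
def FH (d M : ℕ) (x : Fin d → ℤ) (s : ℕ) : Finset (Fin s → (Fin d → ℤ)) :=
  (Fintype.piFinset fun _ => stepSet d).filter
    (fun w => path x w s = 0 ∧ (∀ k < s, path x w k ≠ 0) ∧ (∀ k ≤ s, path x w k ∈ ball d M))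

lemma mem_FH_iff {x : Fin d → ℤ} {s : ℕ} {w : Fin s → (Fin d → ℤ)} :
    w ∈ FH d M x s ↔ (∀ i, w i ∈ stepSet d) ∧
      path x w s = 0 ∧ (∀ k < s, path x w k ≠ 0) ∧ (∀ k ≤ s, path x w k ∈ ball d M) := by
  rw [FH, Finset.mem_filter, Fintype.mem_piFinset]

lemma FH_zero_self : FH d M (0 : Fin d → ℤ) 0 = {fun i => i.elim0} := by
  ext w
  rw [mem_FH_iff]
  constructor
  · intro _
    simp only [Finset.mem_singleton]
    funext i; exact i.elim0
  · intro _
    refine ⟨fun i => i.elim0, by simp [path], fun k hk => absurd hk (by omega), ?_⟩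
    intro k hk
    interval_cases k
    simpa [path_zero] using zero_mem_ball (M := M)

lemma FH_zero_of_ne {x : Fin d → ℤ} (hx : x ≠ 0) : FH d M x 0 = ∅ := by
  ext w
  simp only [Finset.notMem_empty, iff_false]
  intro hw
  rw [mem_FH_iff] at hw
  exact absurd (by simpa [path_zero] using hw.2.1) hx

lemma FH_succ_zero_start (s : ℕ) : FH d M (0 : Fin d → ℤ) (s+1) = ∅ := by
  ext w
  simp only [Finset.notMem_empty, iff_false]
  intro hw
  rw [mem_FH_iff] at hw
  exact absurd (path_zero (0 : Fin d → ℤ) w) (hw.2.2.1 0 (by omega))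

lemma FH_empty_of_not_mem {x : Fin d → ℤ} (hx : x ∉ ball d M) (s : ℕ) : FH d M x s = ∅ := by
  ext w
  simp only [Finset.notMem_empty, iff_false]
  intro hw
  rw [mem_FH_iff] at hw
  exact absurd (by simpa [path_zero] using hw.2.2.2 0 (by omega)) hx

lemma wext_cons {s : ℕ} (e : Fin d → ℤ) (v : Fin s → (Fin d → ℤ)) :
    ∀ i, wext (Fin.cons e v : Fin (s+1) → (Fin d → ℤ)) (i + 1) = wext v i := by
  intro i
  by_cases h : i < s
  · rw [wext, dif_pos (by omega : i + 1 < s + 1), wext, dif_pos h]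
    exact congrArg _ rfl
  · rw [wext, dif_neg (by omega), wext, dif_neg h]

lemma wext_cons_zero {s : ℕ} (e : Fin d → ℤ) (v : Fin s → (Fin d → ℤ)) :
    wext (Fin.cons e v : Fin (s+1) → (Fin d → ℤ)) 0 = e := by
  rw [wext, dif_pos (by omega : 0 < s + 1)]
  rfl

lemma path_cons (x : Fin d → ℤ) {s : ℕ} (e : Fin d → ℤ) (v : Fin s → (Fin d → ℤ)) (k : ℕ) :
    path x (Fin.cons e v : Fin (s+1) → (Fin d → ℤ)) (k + 1) = path (x + e) v k := by
  rw [path, path, Finset.sum_range_succ']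
  rw [wext_cons_zero]
  rw [Finset.sum_congr rfl fun i _ => wext_cons e v i]
  abel

lemma cons_tail_eq {s : ℕ} (w : Fin (s+1) → (Fin d → ℤ)) :
    Fin.cons (w 0) (Fin.tail w) = w := Fin.cons_self_tail w

lemma path_tail (x : Fin d → ℤ) {s : ℕ} (w : Fin (s+1) → (Fin d → ℤ)) (k : ℕ) :
    path x w (k+1) = path (x + w 0) (Fin.tail w) k := by
  conv_lhs => rw [← cons_tail_eq w]
  exact path_cons x (w 0) (Fin.tail w) k

/-- first-hit counting recursion -/
lemma FH_card_succ {x : Fin d → ℤ} (hx : x ∈ ball d M) (h0 : x ≠ 0) (s : ℕ) :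
    (FH d M x (s+1)).card = ∑ e ∈ stepSet d, (FH d M (x + e) s).card := by
  rw [← Finset.card_biUnion]
  · apply Finset.card_bij (fun w _ => Fin.tail w)
    · -- maps to
      intro w hw
      rw [mem_FH_iff] at hw
      obtain ⟨hsteps, hend, hne, hstay⟩ := hw
      rw [Finset.mem_biUnion]
      refine ⟨w 0, hsteps 0, ?_⟩
      rw [mem_FH_iff]
      refine ⟨fun i => hsteps i.succ, ?_, ?_, ?_⟩
      · rw [← path_tail]; exact hend
      · intro k hk; rw [← path_tail]; exact hne (k+1) (by omega)
      · intro k hk; rw [← path_tail]; exact hstay (k+1) (by omega)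
    · -- injective
      intro w1 hw1 w2 hw2 h
      rw [mem_FH_iff] at hw1 hw2
      have h0eq : w1 0 = w2 0 := by
        have e1 := (path_tail x w1 s).symm.trans hw1.2.1
        have e2 := (path_tail x w2 s).symm.trans hw2.2.1
        rw [h] at e1
        have heq : path (x + w1 0) (Fin.tail w2) s = path (x + w2 0) (Fin.tail w2) s :=
          e1.trans e2.symm
        rw [path, path] at heq
        have h1 : x + w1 0 = x + w2 0 := by
          have h3 := congrArg (fun z => z - ∑ i ∈ Finset.range s, wext (Fin.tail w2) i) heq
          simpa using h3
        exact add_left_cancel h1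
      calc w1 = Fin.cons (w1 0) (Fin.tail w1) := (cons_tail_eq w1).symm
        _ = Fin.cons (w2 0) (Fin.tail w2) := by rw [h0eq, h]
        _ = w2 := cons_tail_eq w2
    · -- surjective
      intro v hv
      rw [Finset.mem_biUnion] at hv
      obtain ⟨e, he, hv⟩ := hv
      rw [mem_FH_iff] at hv
      obtain ⟨hsteps, hend, hne, hstay⟩ := hv
      refine ⟨Fin.cons e v, ?_, ?_⟩
      · rw [mem_FH_iff]
        refine ⟨?_, ?_, ?_, ?_⟩
        · intro i
          refine Fin.cases ?_ ?_ i
          · simpa using he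
          · intro j; simpa using hsteps j
        · rw [path_cons]; exact hend
        · intro k hk
          cases k with
          | zero => rw [path_zero]; exact h0
          | succ k => rw [path_cons]; exact hne k (by omega)
        · intro k hk
          cases k with
          | zero => rw [path_zero]; exact hx
          | succ k => rw [path_cons]; exact hstay k (by omega)
      · funext i
        simp [Fin.tail]
  · -- pairwise disjointness of the biUnion
    intro e1 he1 e2 he2 hne
    rw [Function.onFun, Finset.disjoint_left]
    intro v hv1 hv2
    rw [mem_FH_iff] at hv1 hv2
    -- both say path (x+e1) v 0 etc; endpoints differ? paths from different starts:
    -- path (x+e1) v s = 0 = path (x+e2) v s forces e1 = e2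
    apply hne
    have h1 : x + e1 + ∑ i ∈ Finset.range s, wext v i = 0 := hv1.2.1
    have h2 : x + e2 + ∑ i ∈ Finset.range s, wext v i = 0 := hv2.2.1
    have := h1.trans h2.symm
    have : x + e1 = x + e2 := by
      have h3 := congrArg (fun z => z - ∑ i ∈ Finset.range s, wext v i) this
      simpa using h3
    exact add_left_cancel this

end SumHitAux

namespace SumHitAux
open SRW

variable {d M : ℕ}

lemma measurableSet_singleton_V (a : Fin d → ℤ) : MeasurableSet ({a} : Set (Fin d → ℤ)) := by
  rw [← Set.univ_pi_singleton a]
  exact MeasurableSet.univ_pi fun i => measurableSet_singleton _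

/-- cylinder event given by a word of length `s` -/
def cyl (s : ℕ) (w : Fin s → (Fin d → ℤ)) : Set (ℕ → Fin d → ℤ) :=
  {ω | ∀ i : Fin s, ω (i : ℕ) = w i}

lemma cyl_eq (s : ℕ) (w : Fin s → (Fin d → ℤ)) :
    cyl s w = ⋂ i ∈ Finset.range s, (fun ω : ℕ → Fin d → ℤ => ω i) ⁻¹' {wext w i} := by
  ext ω
  simp only [cyl, Set.mem_setOf_eq, Set.mem_iInter, Set.mem_preimage, Set.mem_singleton_iff,
    Finset.mem_range]
  constructor
  · intro h i hi
    rw [wext, dif_pos hi]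
    exact h ⟨i, hi⟩
  · intro h i
    have := h i i.isLt
    rwa [wext, dif_pos i.isLt, Fin.eta] at this

lemma cyl_measurableSet (s : ℕ) (w : Fin s → (Fin d → ℤ)) : MeasurableSet (cyl s w) := by
  rw [cyl_eq]
  exact MeasurableSet.biInter (Finset.range s).countable_toSet
    (fun i _ => (measurable_pi_apply i) (measurableSet_singleton_V _))

/-- inverse of the cardinality of the step set, as `ℝ≥0∞` -/
def qE (d : ℕ) : ℝ≥0∞ := ((2 * d : ℕ) : ℝ≥0∞)⁻¹

lemma meas_eval_singleton (W : SRW d) (n : ℕ) {a : Fin d → ℤ} (ha : a ∈ stepSet d) :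
    W.P ((fun ω => ω n) ⁻¹' {a}) = qE d := by
  have h1 : (W.P.map (fun ω => ω n)) {a} = W.P ((fun ω => ω n) ⁻¹' {a}) :=
    MeasureTheory.Measure.map_apply (measurable_pi_apply n) (measurableSet_singleton_V a)
  rw [← h1, W.hdist n, PMF.toMeasure_apply_singleton _ _ (measurableSet_singleton_V a),
    PMF.uniformOfFinset_apply, if_pos ha, card_stepSet, qE]

lemma meas_cyl (W : SRW d) {s : ℕ} {w : Fin s → (Fin d → ℤ)} (hw : ∀ i, w i ∈ stepSet d) :
    W.P (cyl s w) = qE d ^ s := by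
  rw [cyl_eq]
  have hind := (iIndepFun_iff_measure_inter_preimage_eq_mul.mp W.hindep) (Finset.range s)
    (sets := fun i => {wext w i}) (fun i _ => measurableSet_singleton_V _)
  rw [hind]
  have heach : ∀ i ∈ Finset.range s,
      W.P ((fun ω => ω i) ⁻¹' {wext w i}) = qE d := by
    intro i hi
    rw [Finset.mem_range] at hi
    apply meas_eval_singleton
    rw [wext, dif_pos hi]
    exact hw _
  rw [Finset.prod_congr rfl heach, Finset.prod_const, Finset.card_range]

/-- the event that the first hit of `0` (within the ball) happens at time `s` -/
def hitC (W : SRW d) (M : ℕ) (x : Fin d → ℤ) (s : ℕ) : Set (ℕ → Fin d → ℤ) :=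
  ⋃ w ∈ FH d M x s, cyl s w

lemma hitC_measurableSet (W : SRW d) (x : Fin d → ℤ) (s : ℕ) :
    MeasurableSet (hitC W M x s) :=
  MeasurableSet.biUnion (FH d M x s).countable_toSet (fun w _ => cyl_measurableSet s w)

lemma pos_eq_path {x : Fin d → ℤ} {s : ℕ} {w : Fin s → (Fin d → ℤ)} (W : SRW d)
    {ω : ℕ → Fin d → ℤ} (hω : ω ∈ cyl s w) {k : ℕ} (hk : k ≤ s) :
    W.pos x k ω = path x w k := by
  rw [SRW.pos, path]
  congr 1
  refine Finset.sum_congr rfl fun i hi => ?_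
  rw [Finset.mem_range] at hi
  have hi' : i < s := lt_of_lt_of_le hi hk
  rw [wext, dif_pos hi']
  exact hω ⟨i, hi'⟩

lemma hitC_subset (W : SRW d) (x : Fin d → ℤ) (s : ℕ) :
    hitC W M x s ⊆ W.hitBefore x M := by
  intro ω hω
  rw [hitC, Set.mem_iUnion₂] at hω
  obtain ⟨w, hw, hcyl⟩ := hω
  rw [mem_FH_iff] at hw
  refine ⟨s, ?_, ?_⟩
  · rw [pos_eq_path W hcyl le_rfl]; exact hw.2.1
  · intro k hk
    rw [pos_eq_path W hcyl hk]
    exact hw.2.2.2 k hk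

lemma meas_hitC (W : SRW d) (x : Fin d → ℤ) (s : ℕ) :
    W.P (hitC W M x s) = (FH d M x s).card * qE d ^ s := by
  rw [hitC, measure_biUnion_finset ?disj (fun w _ => cyl_measurableSet s w)]
  · rw [Finset.sum_congr rfl (fun w hw => meas_cyl W (mem_FH_iff.mp hw).1), Finset.sum_const,
      nsmul_eq_mul]
  case disj =>
    intro w1 hw1 w2 hw2 hne
    rw [Function.onFun, Set.disjoint_left]
    intro ω h1 h2
    apply hne
    funext i
    exact (h1 i).symm.trans (h2 i)

lemma hitC_disjoint_of_lt (W : SRW d) (x : Fin d → ℤ) {s s' : ℕ} (h : s < s') :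
    Disjoint (hitC W M x s) (hitC W M x s') := by
  rw [Set.disjoint_left]
  intro ω h1 h2
  rw [hitC, Set.mem_iUnion₂] at h1 h2
  obtain ⟨w, hw, hcyl⟩ := h1
  obtain ⟨w', hw', hcyl'⟩ := h2
  rw [mem_FH_iff] at hw hw'
  have e1 : W.pos x s ω = 0 := by rw [pos_eq_path W hcyl le_rfl]; exact hw.2.1
  have e2 : W.pos x s ω ≠ 0 := by
    rw [pos_eq_path W hcyl' h.le]
    exact hw'.2.2.1 s h
  exact e2 e1

lemma hitC_pairwise_disjoint (W : SRW d) (x : Fin d → ℤ) :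
    Pairwise (Function.onFun Disjoint (fun s => hitC W M x s)) := by
  intro s s' hne
  rcases lt_or_gt_of_ne hne with h | h
  · exact hitC_disjoint_of_lt W x h
  · exact (hitC_disjoint_of_lt W x h).symm

/-- (a lower bound for) the probability of hitting `0` before exiting the ball -/
def hh (W : SRW d) (M : ℕ) (x : Fin d → ℤ) : ℝ≥0∞ := ∑' s, W.P (hitC W M x s)

lemma hh_eq (W : SRW d) (x : Fin d → ℤ) :
    hh W M x = ∑' s, (FH d M x s).card * qE d ^ s := by
  rw [hh]; exact tsum_congr fun s => meas_hitC W x s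

lemma hh_le (W : SRW d) (x : Fin d → ℤ) : hh W M x ≤ W.P (W.hitBefore x M) := by
  rw [hh, ← measure_iUnion (hitC_pairwise_disjoint W x) (hitC_measurableSet W x)]
  exact measure_mono (Set.iUnion_subset fun s => hitC_subset W x s)

lemma hh_ne_top (W : SRW d) (x : Fin d → ℤ) : hh W M x ≠ ⊤ := by
  have : hh W M x ≤ 1 := by
    haveI := W.hprob
    exact le_trans (hh_le W x) (prob_le_one)
  exact ne_top_of_le_ne_top ENNReal.one_ne_top this

lemma hh_zero_eq_one (W : SRW d) : hh W M (0 : Fin d → ℤ) = 1 := by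
  rw [hh_eq]
  rw [tsum_eq_single 0 ?_]
  · rw [pow_zero, mul_one, FH_zero_self]
    simp
  · intro s hs
    obtain ⟨s', rfl⟩ := Nat.exists_eq_succ_of_ne_zero hs
    rw [FH_succ_zero_start]
    simp

lemma hh_eq_zero_of_not_mem (W : SRW d) {x : Fin d → ℤ} (hx : x ∉ ball d M) :
    hh W M x = 0 := by
  rw [hh_eq]
  convert tsum_zero with s
  rw [FH_empty_of_not_mem hx]
  simp

lemma hh_harmonic (W : SRW d) {x : Fin d → ℤ} (hx : x ∈ ball d M) (h0 : x ≠ 0) :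
    hh W M x = qE d * ∑ e ∈ stepSet d, hh W M (x + e) := by
  rw [hh_eq, tsum_eq_zero_add' ENNReal.summable]
  rw [FH_zero_of_ne h0]
  simp only [Finset.card_empty, Nat.cast_zero, zero_mul, zero_add]
  have hrec : ∀ s : ℕ, ((FH d M x (s+1)).card : ℝ≥0∞) * qE d ^ (s+1)
      = qE d * ∑ e ∈ stepSet d, ((FH d M (x+e) s).card : ℝ≥0∞) * qE d ^ s := by
    intro s
    rw [FH_card_succ hx h0 s, Finset.mul_sum]
    push_cast
    rw [Finset.sum_mul]
    refine Finset.sum_congr rfl fun e _ => ?_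
    ring
  rw [tsum_congr hrec, ENNReal.tsum_mul_left]
  congr 1
  rw [Summable.tsum_finsetSum fun e _ => ENNReal.summable]
  refine Finset.sum_congr rfl fun e _ => (hh_eq W (x+e)).symm

/-- real-valued version -/
def hr (W : SRW d) (M : ℕ) (x : Fin d → ℤ) : ℝ := (hh W M x).toReal

lemma hr_nonneg (W : SRW d) (x : Fin d → ℤ) : 0 ≤ hr W M x := ENNReal.toReal_nonneg

lemma hr_zero_eq_one (W : SRW d) : hr W M (0 : Fin d → ℤ) = 1 := by
  rw [hr, hh_zero_eq_one]; simp

lemma hr_eq_zero_of_not_mem (W : SRW d) {x : Fin d → ℤ} (hx : x ∉ ball d M) :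
    hr W M x = 0 := by
  rw [hr, hh_eq_zero_of_not_mem W hx]; simp

lemma hr_harmonic (W : SRW d) (hd : 0 < d) {x : Fin d → ℤ} (hx : x ∈ ball d M) (h0 : x ≠ 0) :
    2 * (d : ℝ) * hr W M x = ∑ e ∈ stepSet d, hr W M (x + e) := by
  have h2d : ((2 * d : ℕ) : ℝ≥0∞) ≠ 0 := by
    simp; omega
  have h2dt : ((2 * d : ℕ) : ℝ≥0∞) ≠ ⊤ := ENNReal.natCast_ne_top _
  have key : ((2 * d : ℕ) : ℝ≥0∞) * hh W M x = ∑ e ∈ stepSet d, hh W M (x + e) := by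
    rw [hh_harmonic W hx h0, ← mul_assoc, qE, ENNReal.mul_inv_cancel h2d h2dt, one_mul]
  have := congrArg ENNReal.toReal key
  rw [ENNReal.toReal_mul, ENNReal.toReal_sum (fun e _ => hh_ne_top W (x+e))] at this
  rw [show (((2 * d : ℕ) : ℝ≥0∞)).toReal = ((2 * d : ℕ) : ℝ) from rfl] at this
  simp only [hr]
  rw [← this]
  push_cast
  ring

end SumHitAux


namespace SumHitAux
open SRW

variable {d M : ℕ}

/-- an enlarged box containing the ball and its neighbors -/
def NB (d M : ℕ) : Finset (Fin d → ℤ) :=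
  Finset.Icc (fun _ => -((M : ℤ) + 1)) (fun _ => (M : ℤ) + 1)

lemma mem_NB_iff {x : Fin d → ℤ} :
    x ∈ NB d M ↔ ∀ i, -((M:ℤ)+1) ≤ x i ∧ x i ≤ (M:ℤ)+1 := by
  rw [NB, Finset.mem_Icc, Pi.le_def, Pi.le_def]
  exact ⟨fun h i => ⟨h.1 i, h.2 i⟩, fun h => ⟨fun i => (h i).1, fun i => (h i).2⟩⟩

lemma ball_bounds {x : Fin d → ℤ} (hx : x ∈ ball d M) :
    ∀ i, -(M:ℤ) ≤ x i ∧ x i ≤ (M:ℤ) := by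
  have h := (Finset.mem_filter.mp hx).1
  rw [Finset.mem_Icc, Pi.le_def, Pi.le_def] at h
  exact fun i => ⟨h.1 i, h.2 i⟩

lemma ball_subset_NB : ball d M ⊆ NB d M := by
  intro x hx
  rw [mem_NB_iff]
  intro i
  have := ball_bounds hx i
  omega

lemma step_bounds (i : Fin d) (b : Bool) (j : Fin d) :
    -(1:ℤ) ≤ step i b j ∧ step i b j ≤ 1 := by
  rw [step]
  by_cases h : j = i <;> cases b <;> simp [h]

lemma add_step_mem_NB {x e : Fin d → ℤ} (hx : x ∈ ball d M) (he : e ∈ stepSet d) :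
    x + e ∈ NB d M := by
  obtain ⟨i, b, rfl⟩ := mem_stepSet_iff.mp he
  rw [mem_NB_iff]
  intro j
  have h1 := ball_bounds hx j
  have h2 := step_bounds i b j
  have : (x + step i b) j = x j + step i b j := rfl
  omega

lemma stepSet_neg_mem {e : Fin d → ℤ} (he : e ∈ stepSet d) : -e ∈ stepSet d := by
  obtain ⟨i, b, rfl⟩ := mem_stepSet_iff.mp he
  rw [mem_stepSet_iff]
  refine ⟨i, !b, ?_⟩
  funext j
  by_cases h : j = i <;> cases b <;> simp [step, h]

lemma uF_ne_zero_imp {y : Fin d → ℤ} (h : uF d M y ≠ 0) : y ∈ ball d M ∧ y ≠ 0 := by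
  by_contra hc
  rw [uF, if_neg hc] at h
  exact h rfl

lemma mem_erase_ball_iff {y : Fin d → ℤ} :
    y ∈ (ball d M).erase 0 ↔ y ∈ ball d M ∧ y ≠ 0 := by
  rw [Finset.mem_erase]; tauto

/-- the main summation-by-parts estimate -/
lemma key_sum (W : SRW d) (hd : 0 < d) (hM : 1 ≤ M) :
    cM M - 1 ≤ ∑ x ∈ (ball d M).erase 0, hr W M x := by
  classical
  set B' := (ball d M).erase 0 with hB'
  have hB'ball : B' ⊆ ball d M := Finset.erase_subset _ _
  have hB'NB : B' ⊆ NB d M := hB'ball.trans ball_subset_NB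
  set U : (Fin d → ℤ) → ℝ := fun x => ∑ e ∈ stepSet d, uF d M (x + e) with hU
  set H : (Fin d → ℤ) → ℝ := fun x => ∑ e ∈ stepSet d, hr W M (x + e) with hH
  -- expansion of double sums
  have expand : ∀ (f g : (Fin d → ℤ) → ℝ),
      ∑ x ∈ NB d M, f x * (∑ e ∈ stepSet d, g (x + e))
        = ∑ p ∈ (NB d M) ×ˢ stepSet d, f p.1 * g (p.1 + p.2) := by
    intro f g
    rw [Finset.sum_product]
    exact Finset.sum_congr rfl fun x _ => Finset.mul_sum _ _ _
  -- the symmetry identity I1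
  have uF_zero_off : ∀ {y : Fin d → ℤ}, y ∉ B' → uF d M y = 0 := by
    intro y hy
    rw [uF, if_neg]
    intro hc
    exact hy (mem_erase_ball_iff.mpr hc)
  have I1 : ∑ x ∈ NB d M, hr W M x * U x = ∑ x ∈ NB d M, uF d M x * H x := by
    rw [hU, hH]
    rw [expand (hr W M) (uF d M), expand (uF d M) (hr W M)]
    have e1 : ∑ p ∈ (NB d M ×ˢ stepSet d).filter (fun p => p.1 + p.2 ∈ B'),
          hr W M p.1 * uF d M (p.1 + p.2)
        = ∑ p ∈ NB d M ×ˢ stepSet d, hr W M p.1 * uF d M (p.1 + p.2) :=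
      Finset.sum_filter_of_ne (fun p _ hne => by
        by_contra hc
        exact hne (by rw [uF_zero_off hc, mul_zero]))
    have e2 : ∑ p ∈ (NB d M ×ˢ stepSet d).filter (fun p => p.1 ∈ B'),
          uF d M p.1 * hr W M (p.1 + p.2)
        = ∑ p ∈ NB d M ×ˢ stepSet d, uF d M p.1 * hr W M (p.1 + p.2) :=
      Finset.sum_filter_of_ne (fun p _ hne => by
        by_contra hc
        exact hne (by rw [uF_zero_off hc, zero_mul]))
    rw [← e1, ← e2]
    refine Finset.sum_nbij' (fun p => (p.1 + p.2, -p.2)) (fun p => (p.1 + p.2, -p.2))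
      ?_ ?_ ?_ ?_ ?_
    · intro p hp
      have hp' := Finset.mem_filter.mp hp
      have hp2 := (Finset.mem_product.mp hp'.1).2
      refine Finset.mem_filter.mpr ⟨Finset.mem_product.mpr ⟨?_, ?_⟩, ?_⟩
      · exact ball_subset_NB (hB'ball hp'.2)
      · exact stepSet_neg_mem hp2
      · exact hp'.2
    · intro p hp
      have hp' := Finset.mem_filter.mp hp
      have hp2 := (Finset.mem_product.mp hp'.1).2
      refine Finset.mem_filter.mpr ⟨Finset.mem_product.mpr ⟨?_, ?_⟩, ?_⟩
      · exact add_step_mem_NB (hB'ball hp'.2) hp2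
      · exact stepSet_neg_mem hp2
      · show p.1 + p.2 + -p.2 ∈ B'
        rw [add_neg_cancel_right]
        exact hp'.2
    · intro p _
      show (p.1 + p.2 + -p.2, - -p.2) = p
      rw [add_neg_cancel_right, neg_neg]
    · intro p _
      show (p.1 + p.2 + -p.2, - -p.2) = p
      rw [add_neg_cancel_right, neg_neg]
    · intro p _
      show hr W M p.1 * uF d M (p.1 + p.2) = uF d M (p.1 + p.2) * hr W M (p.1 + p.2 + -p.2)
      rw [add_neg_cancel_right]
      ring
  -- reduce LHS of I1 to the ball
  have L1 : ∑ x ∈ NB d M, hr W M x * U x = ∑ x ∈ ball d M, hr W M x * U x := by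
    refine (Finset.sum_subset ball_subset_NB fun x _ hnot => ?_).symm
    rw [hr_eq_zero_of_not_mem W hnot, zero_mul]
  have L2 : ∑ x ∈ ball d M, hr W M x * U x
      = hr W M 0 * U 0 + ∑ x ∈ B', hr W M x * U x :=
    (Finset.add_sum_erase _ _ zero_mem_ball).symm
  have L3 : hr W M 0 * U 0 = 2 * (d:ℝ) * (cM M - 1) := by
    rw [hr_zero_eq_one, one_mul, hU]
    simp only [zero_add]
    have hconst : ∀ e ∈ stepSet d, uF d M e = cM M - 1 := by
      intro e he
      obtain ⟨i, b, rfl⟩ := mem_stepSet_iff.mp he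
      exact uF_step hM i b
    rw [Finset.sum_congr rfl hconst, Finset.sum_const, card_stepSet, nsmul_eq_mul]
    push_cast
    ring
  -- reduce RHS of I1 to B'
  have R1 : ∑ x ∈ NB d M, uF d M x * H x = ∑ x ∈ B', uF d M x * H x := by
    refine (Finset.sum_subset hB'NB fun x _ hnot => ?_).symm
    have : uF d M x = 0 := by
      by_contra h
      exact hnot (mem_erase_ball_iff.mpr (uF_ne_zero_imp h))
    rw [this, zero_mul]
  have R2 : ∀ x ∈ B', uF d M x * H x = uF d M x * (2 * (d:ℝ) * hr W M x) := by
    intro x hx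
    obtain ⟨hball, hne0⟩ := mem_erase_ball_iff.mp hx
    rw [hH]
    simp only
    rw [← hr_harmonic W hd hball hne0]
  -- pointwise lower bound for U on B'
  have PB : ∀ x ∈ B', hr W M x * (2 * (d:ℝ) * uF d M x - 2 * d) ≤ hr W M x * U x := by
    intro x hx
    obtain ⟨hball, hne0⟩ := mem_erase_ball_iff.mp hx
    exact mul_le_mul_of_nonneg_left (uF_superharm hball hne0) (hr_nonneg W x)
  -- assemble
  set D := 2 * (d:ℝ) with hD
  have hDpos : 0 < D := by
    rw [hD]; positivity
  have S2eq : ∑ x ∈ B', uF d M x * H x = ∑ x ∈ B', D * (uF d M x * hr W M x) := by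
    refine Finset.sum_congr rfl fun x hx => ?_
    rw [R2 x hx]; ring
  have EQ : D * (cM M - 1) + ∑ x ∈ B', hr W M x * U x
      = ∑ x ∈ B', D * (uF d M x * hr W M x) := by
    rw [← S2eq, ← R1, ← I1, L1, L2, L3]
  have LB : ∑ x ∈ B', D * (uF d M x * hr W M x) - ∑ x ∈ B', D * hr W M x
      ≤ ∑ x ∈ B', hr W M x * U x := by
    have h : ∑ x ∈ B', (D * (uF d M x * hr W M x) - D * hr W M x)
        ≤ ∑ x ∈ B', hr W M x * U x := by
      refine Finset.sum_le_sum fun x hx => le_trans (le_of_eq ?_) (PB x hx)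
      ring
    rw [Finset.sum_sub_distrib] at h
    exact h
  have hsum : ∑ x ∈ B', D * hr W M x = D * ∑ x ∈ B', hr W M x := (Finset.mul_sum _ _ _).symm
  have final : D * (cM M - 1) ≤ D * ∑ x ∈ B', hr W M x := by
    rw [← hsum]; linarith
  exact le_of_mul_le_mul_left final hDpos

end SumHitAux

/-- For simple random walk on `ℤ^d`,
`∑_{x ∈ B_M} P_x[τ_0 < τ_M] ≥ M`. -/
theorem sum_hit_prob_ge {d : ℕ} (W : SRW d) (M : ℕ) :
    (M : ℝ≥0∞) ≤ ∑ x ∈ SRW.ball d M, W.P (W.hitBefore x M) := by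
  classical
  obtain ⟨e0, he0⟩ := W.hne
  obtain ⟨i0, b0, -⟩ := SumHitAux.mem_stepSet_iff.mp he0
  have hd : 0 < d := i0.pos
  rcases Nat.eq_zero_or_pos M with rfl | hM
  · simp
  have key : (M : ℝ) ≤ ∑ x ∈ SRW.ball d M, SumHitAux.hr W M x := by
    have h1 := SumHitAux.key_sum W hd hM
    have h2 : ∑ x ∈ SRW.ball d M, SumHitAux.hr W M x
        = SumHitAux.hr W M 0 + ∑ x ∈ (SRW.ball d M).erase 0, SumHitAux.hr W M x :=
      (Finset.add_sum_erase _ _ SumHitAux.zero_mem_ball).symm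
    rw [h2, SumHitAux.hr_zero_eq_one]
    have h3 := SumHitAux.cM_ge_M (M := M)
    linarith
  calc (M : ℝ≥0∞) = ENNReal.ofReal (M : ℝ) := by rw [ENNReal.ofReal_natCast]
    _ ≤ ENNReal.ofReal (∑ x ∈ SRW.ball d M, SumHitAux.hr W M x) := ENNReal.ofReal_le_ofReal key
    _ = ∑ x ∈ SRW.ball d M, ENNReal.ofReal (SumHitAux.hr W M x) :=
        ENNReal.ofReal_sum_of_nonneg (fun x _ => SumHitAux.hr_nonneg W x)
    _ = ∑ x ∈ SRW.ball d M, SumHitAux.hh W M x := by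
        refine Finset.sum_congr rfl fun x _ => ?_
        rw [SumHitAux.hr, ENNReal.ofReal_toReal (SumHitAux.hh_ne_top W x)]
    _ ≤ _ := Finset.sum_le_sum fun x _ => SumHitAux.hh_le W x
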